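/- For the string rewriting system ⟨ a, b | α: a ⇒ b, β: b ⇒ a ⟩ with quasi-normal forms chosen as ~u = a^{|u|}, the labelling to the quasi-normal form satisfies ψ(u₁ f u₂) = d(u₁, a^{|u₁|}) + ψ(f) + d(u₂, a^{|u₂|}) for every rewriting step f and all words u₁, u₂; consequently this labelling is compatible with contexts. -/

import Mathlib

/-- The alphabet `{a, b}`. -/
inductive AB : Type
  | a : AB
  | b : AB

open AB

/-- The rules `α : a ⇒ b` and `β : b ⇒ a`. -/
inductive ABRule : List AB → List AB → Prop
  | alpha : ABRule [a] [b]
  | beta : ABRule [b] [a]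

/-- One-step rewriting relation of a string rewriting system `R`. -/
def Step {A : Type*} (R : List A → List A → Prop) (u v : List A) : Prop :=
  ∃ l r x y, R x y ∧ u = l ++ x ++ r ∧ v = l ++ y ++ r

/-- `StepN R n u v`: there is a rewriting sequence of length `n` from `u` to `v`. -/
inductive StepN {A : Type*} (R : List A → List A → Prop) : ℕ → List A → List A → Prop
  | refl (u : List A) : StepN R 0 u u
  | head {n : ℕ} {u v w : List A} : Step R u v → StepN R n v w → StepN R (n + 1) u w

/-- Distance: length of a shortest rewriting sequence. -/
noncomputable def dist {A : Type*} (R : List A → List A → Prop) (u v : List A) : ℕ :=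
  sInf {n | StepN R n u v}

/-- The chosen quasi-normal form `~u = a^{|u|}`. -/
def nf (u : List AB) : List AB := List.replicate u.length a

/-- The QNF labelling: the label of a step is the distance from its target to
the chosen quasi-normal form of the target. -/
noncomputable def ψ (u : List AB) : ℕ := dist ABRule u (nf u)

/-- Labels of the successive steps of a rewriting sequence. -/
noncomputable def chainLabels : List AB → List (List AB) → List ℕ
  | _, [] => []
  | _, w :: l => ψ w :: chainLabels w l

instance : DecidableEq AB := fun x y => by
  cases x <;> cases y <;> first | exact isTrue rfl | exact isFalse (by simp)

/-- Number of `b`'s. -/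
def cb (u : List AB) : ℕ := u.count b

lemma cb_append (u v : List AB) : cb (u ++ v) = cb u + cb v := List.count_append ..

lemma step_whisker {x y u₁ u₂ : List AB} (h : Step ABRule x y) :
    Step ABRule (u₁ ++ x ++ u₂) (u₁ ++ y ++ u₂) := by
  obtain ⟨l, r, p, q, hr, hx, hy⟩ := h
  exact ⟨u₁ ++ l, r ++ u₂, p, q, hr, by simp [hx], by simp [hy]⟩

lemma stepN_whisker {n : ℕ} {x y : List AB} (u₁ u₂ : List AB)
    (h : StepN ABRule n x y) : StepN ABRule n (u₁ ++ x ++ u₂) (u₁ ++ y ++ u₂) := by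
  induction h with
  | refl u => exact StepN.refl _
  | head hs _ ih => exact StepN.head (step_whisker hs) ih

lemma stepN_to_nf (u : List AB) : StepN ABRule (cb u) u (nf u) := by
  induction u with
  | nil => exact StepN.refl _
  | cons c t ih =>
    cases c with
    | a =>
      have : StepN ABRule (cb t) ([a] ++ t ++ []) ([a] ++ nf t ++ []) :=
        stepN_whisker [a] [] ih
      simpa [cb, nf, List.replicate_succ] using this
    | b =>
      have h1 : Step ABRule (b :: t) (a :: t) :=
        ⟨[], t, [b], [a], ABRule.beta, by simp, by simp⟩
      have h2 : StepN ABRule (cb t) ([a] ++ t ++ []) ([a] ++ nf t ++ []) :=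
        stepN_whisker [a] [] ih
      have : StepN ABRule (cb t + 1) (b :: t) (a :: nf t) :=
        StepN.head h1 (by simpa using h2)
      simpa [cb, nf, List.replicate_succ] using this

lemma step_cb_le {u v : List AB} (h : Step ABRule u v) : cb u ≤ cb v + 1 := by
  obtain ⟨l, r, p, q, hr, hx, hy⟩ := h
  subst hx hy
  cases hr <;> simp [cb_append, cb, List.count_cons] <;> omega

lemma stepN_cb_le {n : ℕ} {u v : List AB} (h : StepN ABRule n u v) :
    cb u ≤ cb v + n := by
  induction h with
  | refl u => simp
  | head hs _ ih => have := step_cb_le hs; omega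

lemma cb_nf (u : List AB) : cb (nf u) = 0 := by
  simp [cb, nf, List.count_replicate]

lemma dist_nf (u : List AB) : dist ABRule u (nf u) = cb u := by
  apply le_antisymm
  · exact Nat.sInf_le (stepN_to_nf u)
  · refine le_csInf ⟨cb u, stepN_to_nf u⟩ ?_
    intro n hn
    have := stepN_cb_le hn
    have := cb_nf u
    omega

lemma psi_eq (u : List AB) : ψ u = cb u := dist_nf u

lemma psi_whisker (u₁ z u₂ : List AB) :
    ψ (u₁ ++ z ++ u₂) = cb u₁ + ψ z + cb u₂ := by
  simp [psi_eq, cb_append]; omega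

lemma chainLabels_eq (w : List AB) (l : List (List AB)) :
    chainLabels w l = l.map ψ := by
  induction l generalizing w with
  | nil => rfl
  | cons z t ih => simp [chainLabels, ih]

lemma getLast_map_cons (f : List AB → List AB) (v : List AB) (l : List (List AB)) :
    (f v :: l.map f).getLast (by simp) = f ((v :: l).getLast (by simp)) := by
  induction l generalizing v with
  | nil => rfl
  | cons z t ih =>
    rw [List.map_cons, List.getLast_cons_cons, List.getLast_cons_cons]
    exact ih z

/-- For `⟨ a, b | a ⇒ b, b ⇒ a ⟩` with quasi-normal forms `~u = a^{|u|}`, the QNF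
labelling satisfies `ψ(u₁ f u₂) = d(u₁, a^{|u₁|}) + ψ(f) + d(u₂, a^{|u₂|})`;
consequently it is compatible with contexts: whiskering any strictly decreasing
confluence diagram of a local branching yields a strictly decreasing diagram. -/
theorem ab_qnf_labelling_compatible :
    (∀ (x y u₁ u₂ : List AB), Step ABRule x y →
      ψ (u₁ ++ y ++ u₂) = dist ABRule u₁ (nf u₁) + ψ y + dist ABRule u₂ (nf u₂)) ∧
    (∀ (u v w : List AB) (lf lg : List (List AB)), Step ABRule u v → Step ABRule u w →
      List.Chain (Step ABRule) v lf → List.Chain (Step ABRule) w lg →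
      (v :: lf).getLast (by simp) = (w :: lg).getLast (by simp) →
      (∀ k ∈ chainLabels v lf, k < ψ v) →
      (∀ k ∈ chainLabels w lg, k < ψ w) →
      ∀ u₁ u₂ : List AB,
        List.Chain (Step ABRule) (u₁ ++ v ++ u₂) (lf.map fun z => u₁ ++ z ++ u₂) ∧
        List.Chain (Step ABRule) (u₁ ++ w ++ u₂) (lg.map fun z => u₁ ++ z ++ u₂) ∧
        ((u₁ ++ v ++ u₂) :: (lf.map fun z => u₁ ++ z ++ u₂)).getLast (by simp) =
          ((u₁ ++ w ++ u₂) :: (lg.map fun z => u₁ ++ z ++ u₂)).getLast (by simp) ∧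
        (∀ k ∈ chainLabels (u₁ ++ v ++ u₂) (lf.map fun z => u₁ ++ z ++ u₂),
          k < ψ (u₁ ++ v ++ u₂)) ∧
        (∀ k ∈ chainLabels (u₁ ++ w ++ u₂) (lg.map fun z => u₁ ++ z ++ u₂),
          k < ψ (u₁ ++ w ++ u₂))) := by
  constructor
  · intro x y u₁ u₂ _
    rw [psi_whisker, dist_nf, dist_nf]
  · intro u v w lf lg hv hw chv chw hlast hkv hkw u₁ u₂
    have chain_lift : ∀ (z : List AB) (l : List (List AB)),
        List.Chain (Step ABRule) z l →
        List.Chain (Step ABRule) (u₁ ++ z ++ u₂) (l.map fun t => u₁ ++ t ++ u₂) := by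
      intro z l h
      exact List.isChain_cons_map_of_isChain_cons (fun t => u₁ ++ t ++ u₂) (fun _ _ hs => step_whisker hs) h
    have labels_lift : ∀ (z : List AB) (l : List (List AB)),
        (∀ k ∈ chainLabels z l, k < ψ z) →
        ∀ k ∈ chainLabels (u₁ ++ z ++ u₂) (l.map fun t => u₁ ++ t ++ u₂),
          k < ψ (u₁ ++ z ++ u₂) := by
      intro z l h k hk
      rw [chainLabels_eq, List.map_map] at hk
      obtain ⟨t, ht, rfl⟩ := List.mem_map.mp hk
      have := h (ψ t) (by rw [chainLabels_eq]; exact List.mem_map_of_mem (f := ψ) ht)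
      simp only [Function.comp_apply, psi_whisker]
      omega
    refine ⟨chain_lift v lf chv, chain_lift w lg chw, ?_, labels_lift v lf hkv,
      labels_lift w lg hkw⟩
    exact (getLast_map_cons (fun z => u₁ ++ z ++ u₂) v lf).trans
      ((congrArg (fun t => u₁ ++ t ++ u₂) hlast).trans (getLast_map_cons (fun z => u₁ ++ z ++ u₂) w lg).symm)
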